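/- Let A, B be bounded linear operators on a complex Hilbert space H and α ∈ [0,1]. Then ‖α A + (1−α) B‖² ≤ ‖α² A*A + (1−α)² B*B‖ + 2 α (1−α) w(B*A), where w(T) = sup_{‖x‖=1} |⟨T x, x⟩| is the numerical radius. -/

import Mathlib

open ContinuousLinearMap

noncomputable def numRad {H : Type*} [NormedAddCommGroup H] [InnerProductSpace ℂ H]
    (T : H →L[ℂ] H) : ℝ :=
  sSup {x : ℝ | ∃ y : H, ‖y‖ = 1 ∧ x = ‖(inner ℂ (T y) y : ℂ)‖}

lemma numRad_bdd {H : Type*} [NormedAddCommGroup H] [InnerProductSpace ℂ H]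
    (T : H →L[ℂ] H) :
    BddAbove {x : ℝ | ∃ y : H, ‖y‖ = 1 ∧ x = ‖(inner ℂ (T y) y : ℂ)‖} := by
  refine ⟨‖T‖, ?_⟩
  rintro x ⟨y, hy, rfl⟩
  calc ‖(inner ℂ (T y) y : ℂ)‖ ≤ ‖T y‖ * ‖y‖ := norm_inner_le_norm _ _
    _ = ‖T y‖ := by rw [hy, mul_one]
    _ ≤ ‖T‖ * ‖y‖ := T.le_opNorm y
    _ = ‖T‖ := by rw [hy, mul_one]

lemma le_numRad {H : Type*} [NormedAddCommGroup H] [InnerProductSpace ℂ H]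
    (T : H →L[ℂ] H) {y : H} (hy : ‖y‖ = 1) :
    ‖(inner ℂ (T y) y : ℂ)‖ ≤ numRad T :=
  le_csSup (numRad_bdd T) ⟨y, hy, rfl⟩

lemma numRad_nonneg {H : Type*} [NormedAddCommGroup H] [InnerProductSpace ℂ H]
    [Nontrivial H] (T : H →L[ℂ] H) : 0 ≤ numRad T := by
  obtain ⟨y, hy⟩ := exists_norm_eq H (zero_le_one (α := ℝ))
  exact (norm_nonneg _).trans (le_numRad T hy)

theorem opNorm_convex_comb {H : Type*} [NormedAddCommGroup H] [InnerProductSpace ℂ H] [CompleteSpace H] [Nontrivial H]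
    (A B : H →L[ℂ] H) (α : ℝ) (hα : α ∈ Set.Icc (0 : ℝ) 1) :
    ‖α • A + (1 - α) • B‖ ^ 2
      ≤ ‖(α ^ 2) • (adjoint A * A) + ((1 - α) ^ 2) • (adjoint B * B)‖
        + 2 * α * (1 - α) * numRad (adjoint B * A) := by
  obtain ⟨hα0, hα1⟩ := hα
  obtain ⟨T, hT⟩ : ∃ T : H →L[ℂ] H, T = α • A + (1 - α) • B := ⟨_, rfl⟩
  obtain ⟨S, hS⟩ : ∃ S : H →L[ℂ] H,
      S = (α ^ 2) • (adjoint A * A) + ((1 - α) ^ 2) • (adjoint B * B) := ⟨_, rfl⟩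
  obtain ⟨C, hC⟩ : ∃ c : ℝ, c = ‖S‖ + 2 * α * (1 - α) * numRad (adjoint B * A) := ⟨_, rfl⟩
  rw [← hT, ← hS, ← hC]
  have hC0 : 0 ≤ C := by
    rw [hC]
    have h1 := numRad_nonneg (adjoint B * A)
    have h2 : (0:ℝ) ≤ ‖S‖ := norm_nonneg _
    nlinarith [mul_nonneg (mul_nonneg hα0 (by linarith : (0:ℝ) ≤ 1 - α)) h1]
  -- key pointwise bound on unit vectors
  have key : ∀ y : H, ‖y‖ = 1 → ‖T y‖ ^ 2 ≤ C := by
    intro y hy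
    have hAy : ‖A y‖ ^ 2 = Complex.re (inner ℂ ((adjoint A * A) y) y : ℂ) := by
      rw [ContinuousLinearMap.mul_apply, adjoint_inner_left, inner_self_eq_norm_sq_to_K]
      simp [← Complex.ofReal_pow]
    have hBy : ‖B y‖ ^ 2 = Complex.re (inner ℂ ((adjoint B * B) y) y : ℂ) := by
      rw [ContinuousLinearMap.mul_apply, adjoint_inner_left, inner_self_eq_norm_sq_to_K]
      simp [← Complex.ofReal_pow]
    have hAB : Complex.re (inner ℂ (A y) (B y) : ℂ)
        = Complex.re (inner ℂ ((adjoint B * A) y) y : ℂ) := by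
      rw [ContinuousLinearMap.mul_apply, adjoint_inner_left]
    have hTy : ‖T y‖ ^ 2
        = α ^ 2 * ‖A y‖ ^ 2 + 2 * (α * (1 - α) * Complex.re (inner ℂ (A y) (B y) : ℂ))
          + (1 - α) ^ 2 * ‖B y‖ ^ 2 := by
      have : T y = α • A y + (1 - α) • B y := by simp [hT]
      rw [this, norm_add_sq (𝕜 := ℂ)]
      have h1 : ‖α • A y‖ ^ 2 = α ^ 2 * ‖A y‖ ^ 2 := by
        rw [norm_smul, mul_pow, Real.norm_eq_abs, sq_abs]
      have h2 : ‖(1 - α) • B y‖ ^ 2 = (1 - α) ^ 2 * ‖B y‖ ^ 2 := by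
        rw [norm_smul, mul_pow, Real.norm_eq_abs, sq_abs]
      have h3 : (inner ℂ (α • A y) ((1 - α) • B y) : ℂ)
          = ((α * (1 - α) : ℝ) : ℂ) * (inner ℂ (A y) (B y) : ℂ) := by
        rw [RCLike.real_smul_eq_coe_smul (K := ℂ) α (A y),
            RCLike.real_smul_eq_coe_smul (K := ℂ) (1 - α) (B y),
            inner_smul_left, inner_smul_right]
        simp [Complex.conj_ofReal, RCLike.conj_ofReal]
        push_cast
        ring
      rw [h1, h2, h3]
      simp only [RCLike.re_to_complex, Complex.re_ofReal_mul]
    have hSy : α ^ 2 * ‖A y‖ ^ 2 + (1 - α) ^ 2 * ‖B y‖ ^ 2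
        = Complex.re (inner ℂ (S y) y : ℂ) := by
      rw [hAy, hBy, hS]
      simp only [add_apply, smul_apply, mul_apply, RCLike.real_smul_eq_coe_smul (K := ℂ),
        Complex.coe_algebraMap, inner_add_left, inner_smul_left, Complex.conj_ofReal,
        Complex.add_re, Complex.re_ofReal_mul]
    have hSbound : Complex.re (inner ℂ (S y) y : ℂ) ≤ ‖S‖ := by
      calc Complex.re (inner ℂ (S y) y : ℂ) ≤ ‖(inner ℂ (S y) y : ℂ)‖ :=
            Complex.re_le_norm _
        _ ≤ ‖S y‖ * ‖y‖ := norm_inner_le_norm _ _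
        _ ≤ ‖S‖ * ‖y‖ * ‖y‖ := by
            have := S.le_opNorm y
            nlinarith [norm_nonneg y]
        _ = ‖S‖ := by rw [hy]; ring
    have hNR : Complex.re (inner ℂ ((adjoint B * A) y) y : ℂ) ≤ numRad (adjoint B * A) :=
      (Complex.re_le_norm _).trans (le_numRad _ hy)
    have hprod : 0 ≤ α * (1 - α) := mul_nonneg hα0 (by linarith)
    rw [hTy, hC, hAB]
    
    nlinarith [hSy, hSbound, hNR]
  -- from pointwise bound to operator norm bound
  have hnorm : ‖T‖ ≤ Real.sqrt C := by
    refine T.opNorm_le_bound (Real.sqrt_nonneg C) fun x => ?_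
    rcases eq_or_ne x 0 with rfl | hx
    · simp
    · have hx0 : (0:ℝ) < ‖x‖ := norm_pos_iff.mpr hx
      set y := ‖x‖⁻¹ • x with hyd
      have hy : ‖y‖ = 1 := by
        rw [hyd, norm_smul, Real.norm_eq_abs, abs_of_nonneg (by positivity)]
        field_simp
      have hk := key y hy
      have hTx : ‖T x‖ = ‖x‖ * ‖T y‖ := by
        have hty : T y = ‖x‖⁻¹ • T x := by rw [hyd, T.map_smul_of_tower]
        rw [hty, norm_smul, Real.norm_eq_abs, abs_of_nonneg (inv_nonneg.mpr hx0.le)]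
        field_simp
      rw [hTx]
      have hTy' : ‖T y‖ ≤ Real.sqrt C := by
        have := Real.sqrt_le_sqrt hk
        rwa [Real.sqrt_sq (norm_nonneg _)] at this
      rw [mul_comm]
      exact mul_le_mul_of_nonneg_right hTy' hx0.le
  calc ‖T‖ ^ 2 ≤ Real.sqrt C ^ 2 := by
        exact pow_le_pow_left₀ (norm_nonneg T) hnorm 2
    _ = C := Real.sq_sqrt hC0
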